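/- Let U = [0,1]^n and let g(u) = Σ_{i=1}^n g_i(u_i) be separable, where each g_i : [0,1] → ℝ is differentiable with bounded derivative on [0,1], strictly decreasing on [0,1], and satisfies g_i(0) = 0 and g_i(1) = -1. Then for every x ∈ ℝ^n there exists α_0 > 0 such that for all 0 < α ≤ α_0, (1/α) F^U_{g,α}(x) + n = ‖x‖_0, where ‖x‖_0 is the number of nonzero components of x. In particular, (1/α) F^U_{g,α}(x) + n → ‖x‖_0 as α → 0⁺. -/

import Mathlib

/-- The lifted ℓ1 regularization `F^U_{g,α}(x) = inf_{u ∈ U} (⟨u, |x|⟩ + α g(u))`. -/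
noncomputable def liftedL1 {n : ℕ} (U : Set (Fin n → ℝ)) (g : (Fin n → ℝ) → ℝ) (α : ℝ)
    (x : Fin n → ℝ) : EReal :=
  ⨅ u ∈ U, (((∑ i, u i * |x i|) + α * g u : ℝ) : EReal)

open Finset in
/-- For `U = [0,1]^n` and `g` separable of Type B (each `g_i` differentiable with bounded
derivative on `[0,1]`, strictly decreasing, `g_i(0) = 0`, `g_i(1) = -1`), for every `x` there
exists `α₀ > 0` such that for all `0 < α ≤ α₀`, `(1/α) F^U_{g,α}(x) + n = ‖x‖₀`. -/
theorem liftedL1_approx_l0 {n : ℕ} (g : Fin n → ℝ → ℝ)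
    (hdiff : ∀ i, DifferentiableOn ℝ (g i) (Set.Icc 0 1))
    (hbdd : ∀ i, ∃ M : ℝ, ∀ t ∈ Set.Icc (0 : ℝ) 1,
      |derivWithin (g i) (Set.Icc 0 1) t| ≤ M)
    (hdec : ∀ i, StrictAntiOn (g i) (Set.Icc 0 1))
    (h0 : ∀ i, g i 0 = 0) (h1 : ∀ i, g i 1 = -1) :
    ∀ x : Fin n → ℝ, ∃ α₀ > (0 : ℝ), ∀ α : ℝ, 0 < α → α ≤ α₀ →
      ((α⁻¹ : ℝ) : EReal) *
          liftedL1 {u : Fin n → ℝ | ∀ i, u i ∈ Set.Icc (0 : ℝ) 1}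
            (fun u => ∑ i, g i (u i)) α x
        + ((n : ℝ) : EReal)
      = ((((univ.filter fun i => x i ≠ 0).card : ℝ)) : EReal) := by
  classical
  intro x
  choose M hM using hbdd
  have hM0 : ∀ i, 0 ≤ M i := fun i =>
    le_trans (abs_nonneg _) (hM i 0 (by constructor <;> norm_num))
  -- |g i t| ≤ M i * t on [0,1]
  have hg_bound : ∀ i, ∀ t ∈ Set.Icc (0:ℝ) 1, |g i t| ≤ M i * t := by
    intro i t ht
    have h01 : (0:ℝ) ∈ Set.Icc (0:ℝ) 1 := by constructor <;> norm_num
    have := (convex_Icc (0:ℝ) 1).norm_image_sub_le_of_norm_derivWithin_le (hdiff i)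
      (fun y hy => by simpa [Real.norm_eq_abs] using hM i y hy) h01 ht
    simpa [h0 i, Real.norm_eq_abs, abs_of_nonneg ht.1] using this
  have hg_ge : ∀ i, ∀ t ∈ Set.Icc (0:ℝ) 1, -1 ≤ g i t := by
    intro i t ht
    have h1m : (1:ℝ) ∈ Set.Icc (0:ℝ) 1 := by constructor <;> norm_num
    rcases eq_or_lt_of_le ht.2 with h | h
    · rw [h, h1 i]
    · have := hdec i ht h1m h
      rw [h1 i] at this; linarith
  set k : ℕ := (univ.filter fun i => x i ≠ 0).card with hk
  -- counting lemma
  have hfilter_eq : (univ.filter fun i => ¬ x i ≠ 0) = univ.filter fun i : Fin n => x i = 0 := by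
    apply Finset.filter_congr; intro i _; simp
  have hzcard : (((univ.filter fun i : Fin n => x i = 0).card : ℝ)) = (n:ℝ) - k := by
    have h := Finset.card_filter_add_card_filter_not
      (s := (univ : Finset (Fin n))) (p := fun i => x i ≠ 0)
    rw [hfilter_eq, Finset.card_univ, Fintype.card_fin] at h
    have : k + (univ.filter fun i : Fin n => x i = 0).card = n := h
    push_cast [← this]; ring
  have hsum : ∀ c : ℝ, ∑ i, (if x i ≠ 0 then (0:ℝ) else c) = c * ((n:ℝ) - k) := by
    intro c
    rw [Finset.sum_ite, Finset.sum_const, Finset.sum_const, hfilter_eq]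
    simp only [nsmul_eq_mul, mul_zero, zero_add]
    rw [hzcard]; ring
  set S : Finset ℝ :=
    insert 1 ((univ.filter fun i => x i ≠ 0).image fun i => |x i| / (M i + 1)) with hS
  have hSne : S.Nonempty := ⟨1, by simp [hS]⟩
  refine ⟨S.min' hSne, ?_, ?_⟩
  · rw [gt_iff_lt, Finset.lt_min'_iff]
    intro b hb
    simp only [hS, Finset.mem_insert, Finset.mem_image, Finset.mem_filter] at hb
    rcases hb with rfl | ⟨i, ⟨-, hi⟩, rfl⟩
    · norm_num
    · exact div_pos (abs_pos.mpr hi) (by linarith [hM0 i])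
  · intro α hα hα₀
    -- the minimizer
    set u₀ : Fin n → ℝ := fun i => if x i ≠ 0 then 0 else 1 with hu₀
    have hu₀mem : u₀ ∈ {u : Fin n → ℝ | ∀ i, u i ∈ Set.Icc (0:ℝ) 1} := by
      intro i
      by_cases h : x i = 0 <;> simp [hu₀, h]
    have hval : (∑ i, u₀ i * |x i|) + α * ∑ i, g i (u₀ i) = α * ((k:ℝ) - n) := by
      have h1s : ∑ i, u₀ i * |x i| = 0 := by
        apply Finset.sum_eq_zero
        intro i _
        by_cases h : x i = 0 <;> simp [hu₀, h]
      have h2s : ∑ i, g i (u₀ i) = (k:ℝ) - n := by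
        have hgv : ∀ i, g i (u₀ i) = if x i ≠ 0 then (0:ℝ) else -1 := by
          intro i; by_cases h : x i = 0 <;> simp [hu₀, h, h0 i, h1 i]
        rw [Finset.sum_congr rfl fun i _ => hgv i, hsum (-1)]
        ring
      rw [h1s, h2s]; ring
    have hlow : ∀ u ∈ {u : Fin n → ℝ | ∀ i, u i ∈ Set.Icc (0:ℝ) 1},
        α * ((k:ℝ) - n) ≤ (∑ i, u i * |x i|) + α * ∑ i, g i (u i) := by
      intro u hu
      have hterm : ∀ i, (if x i ≠ 0 then (0:ℝ) else -α) ≤ u i * |x i| + α * g i (u i) := by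
        intro i
        have hui := hu i
        by_cases h : x i ≠ 0
        · rw [if_pos h]
          have hαi : α ≤ |x i| / (M i + 1) := le_trans hα₀ (Finset.min'_le _ _ (by
            simp only [hS, Finset.mem_insert, Finset.mem_image, Finset.mem_filter]
            exact Or.inr ⟨i, ⟨Finset.mem_univ i, h⟩, rfl⟩))
          have hMx : α * (M i + 1) ≤ |x i| :=
            (le_div_iff₀ (by linarith [hM0 i])).mp hαi
          have hgb := hg_bound i (u i) hui
          have habs : -(M i * u i) ≤ g i (u i) := by
            have := neg_abs_le (g i (u i)); linarith
          nlinarith [hui.1, hui.2]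
        · rw [if_neg h]
          simp only [ne_eq, not_not] at h
          have := hg_ge i (u i) hui
          simp only [h, abs_zero, mul_zero]
          nlinarith
      calc α * ((k:ℝ) - n) = ∑ i, (if x i ≠ 0 then (0:ℝ) else -α) := by
            rw [hsum (-α)]; ring
        _ ≤ ∑ i, (u i * |x i| + α * g i (u i)) :=
            Finset.sum_le_sum fun i _ => hterm i
        _ = (∑ i, u i * |x i|) + α * ∑ i, g i (u i) := by
            rw [Finset.sum_add_distrib, Finset.mul_sum]
    have hinf : liftedL1 {u : Fin n → ℝ | ∀ i, u i ∈ Set.Icc (0:ℝ) 1}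
        (fun u => ∑ i, g i (u i)) α x = ((α * ((k:ℝ) - n) : ℝ) : EReal) := by
      unfold liftedL1
      apply le_antisymm
      · exact le_trans (iInf₂_le u₀ hu₀mem) (by rw [hval])
      · refine le_iInf₂ fun u hu => ?_
        exact_mod_cast hlow u hu
    rw [hinf, ← EReal.coe_mul, ← EReal.coe_add, EReal.coe_eq_coe_iff]
    field_simp
    ring
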